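/- The 4×4 symmetric matrix J₃,₁ = 2·[[2,0,0,−1],[0,2,0,1],[0,0,4,2],[−1,1,2,2]] is positive semidefinite of rank 3, and its minimum value kᵀJ₃,₁k over nonzero k ∈ ℤ³ × {−1,0,1} equals 4. -/

import Mathlib

open Matrix

/-- The form `J₃,₁ = 2·[[2,0,0,−1],[0,2,0,1],[0,0,4,2],[−1,1,2,2]]`. -/
noncomputable def J31 : Matrix (Fin 4) (Fin 4) ℝ :=
  (2 : ℝ) • !![2, 0, 0, -1;
               0, 2, 0, 1;
               0, 0, 4, 2;
               -1, 1, 2, 2]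

lemma quad (x : Fin 4 → ℝ) :
    x ⬝ᵥ J31.mulVec x = (2*x 0 - x 3)^2 + (2*x 1 + x 3)^2 + 2*(2*x 2 + x 3)^2 := by
  simp [J31, mulVec, dotProduct, Fin.sum_univ_four, vecHead, vecTail]
  ring

lemma psd : J31.PosSemidef := by
  rw [posSemidef_iff_dotProduct_mulVec]
  constructor
  · ext i j
    fin_cases i <;> fin_cases j <;> simp [J31, vecHead, vecTail]
  · intro x
    simp only [star_trivial]
    rw [quad]
    positivity

lemma rankJ : J31.rank = 3 := by
  have hker : LinearMap.ker J31.mulVecLin = Submodule.span ℝ {![1,-1,-1,2]} := by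
    ext x
    simp only [LinearMap.mem_ker, Submodule.mem_span_singleton]
    constructor
    · intro h
      have h0 := congrFun h 0
      have h1 := congrFun h 1
      have h2 := congrFun h 2
      simp [J31, mulVecLin, mulVec, dotProduct, Fin.sum_univ_four, vecHead, vecTail] at h0 h1 h2
      refine ⟨x 0, ?_⟩
      funext i
      fin_cases i <;> simp <;> linarith
    · rintro ⟨a, rfl⟩
      funext i
      fin_cases i <;> simp [J31, mulVecLin, mulVec, dotProduct, Fin.sum_univ_four, vecHead, vecTail] <;> ring
  have := LinearMap.finrank_range_add_finrank_ker (J31.mulVecLin)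
  rw [hker, finrank_span_singleton (by intro h; have := congrFun h 0; simp at this)] at this
  simp [Matrix.rank] at this ⊢
  omega

lemma sq1 {x : ℤ} (h : x ≠ 0) : 1 ≤ x^2 := by
  rcases lt_or_gt_of_ne h with h' | h' <;> nlinarith

/-- `J₃,₁` is positive semidefinite of rank 3, and its minimum
value `kᵀJ₃,₁k` over nonzero `k ∈ ℤ³ × {−1,0,1}` equals `4`. -/
theorem stmt_19 :
    J31.PosSemidef ∧ J31.rank = 3 ∧
    IsLeast {v : ℝ | ∃ (n : Fin 3 → ℤ) (l : ℤ), l ∈ ({-1, 0, 1} : Set ℤ) ∧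
      (n ≠ 0 ∨ l ≠ 0) ∧
      v = (Fin.snoc (fun i => (n i : ℝ)) (l : ℝ) : Fin 4 → ℝ) ⬝ᵥ
        J31.mulVec (Fin.snoc (fun i => (n i : ℝ)) (l : ℝ))} 4 := by
  refine ⟨psd, rankJ, ?_⟩
  constructor
  · refine ⟨0, 1, by simp, Or.inr one_ne_zero, ?_⟩
    rw [quad]
    simp only [Pi.zero_apply]
    have hs : ∀ i : Fin 3, (Fin.snoc (fun i : Fin 3 => ((0:ℤ) : ℝ)) ((1:ℤ) : ℝ) : Fin 4 → ℝ) i.castSucc = ((0:ℤ) : ℝ) :=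
      fun i => Fin.snoc_castSucc _ _ _
    have h0 := hs 0; have h1 := hs 1; have h2 := hs 2
    have h3 : (Fin.snoc (fun i : Fin 3 => ((0:ℤ) : ℝ)) ((1:ℤ) : ℝ) : Fin 4 → ℝ) (Fin.last 3) = ((1:ℤ) : ℝ) :=
      Fin.snoc_last _ _
    rw [show (0 : Fin 3).castSucc = (0 : Fin 4) from rfl] at h0
    rw [show (1 : Fin 3).castSucc = (1 : Fin 4) from rfl] at h1
    rw [show (2 : Fin 3).castSucc = (2 : Fin 4) from rfl] at h2
    rw [show (Fin.last 3) = (3 : Fin 4) from rfl] at h3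
    rw [h0, h1, h2, h3]
    norm_num
  · rintro v ⟨n, l, hl, hnz, rfl⟩
    rw [quad]
    have hs : ∀ i : Fin 3, (Fin.snoc (fun i => (n i : ℝ)) (l : ℝ) : Fin 4 → ℝ) i.castSucc = (n i : ℝ) :=
      fun i => Fin.snoc_castSucc _ _ _
    have h0 := hs 0; have h1 := hs 1; have h2 := hs 2
    have h3 : (Fin.snoc (fun i => (n i : ℝ)) (l : ℝ) : Fin 4 → ℝ) (Fin.last 3) = (l : ℝ) :=
      Fin.snoc_last _ _
    have e0 : (0 : Fin 3).castSucc = (0 : Fin 4) := rfl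
    have e1 : (1 : Fin 3).castSucc = (1 : Fin 4) := rfl
    have e2 : (2 : Fin 3).castSucc = (2 : Fin 4) := rfl
    have e3 : (Fin.last 3) = (3 : Fin 4) := rfl
    rw [e0] at h0; rw [e1] at h1; rw [e2] at h2; rw [e3] at h3
    rw [h0, h1, h2, h3]
    have key : 4 ≤ (2*n 0 - l)^2 + (2*n 1 + l)^2 + 2*(2*n 2 + l)^2 := by
      rcases hl with rfl | rfl | rfl
      · have a := sq1 (x := 2*n 0 + 1) (by omega)
        have b := sq1 (x := 2*n 1 - 1) (by omega)
        have c := sq1 (x := 2*n 2 - 1) (by omega)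
        nlinarith
      · rcases hnz with hn | hl0
        · have hor : n 0 ≠ 0 ∨ n 1 ≠ 0 ∨ n 2 ≠ 0 := by
            by_contra h
            push_neg at h
            exact hn (funext fun i => by fin_cases i <;> simp [h.1, h.2.1, h.2.2])
          rcases hor with h | h | h <;> have := sq1 h <;>
            nlinarith [sq_nonneg (n 0), sq_nonneg (n 1), sq_nonneg (n 2)]
        · exact absurd rfl hl0
      · have a := sq1 (x := 2*n 0 - 1) (by omega)
        have b := sq1 (x := 2*n 1 + 1) (by omega)
        have c := sq1 (x := 2*n 2 + 1) (by omega)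
        nlinarith
    calc (4:ℝ) = ((4:ℤ):ℝ) := by norm_num
    _ ≤ (((2*n 0 - l)^2 + (2*n 1 + l)^2 + 2*(2*n 2 + l)^2 : ℤ) : ℝ) := by exact_mod_cast key
    _ = _ := by push_cast; ring
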